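/- A vector u ∈ ℝ² lies in Z[ω] (under the identification of ℂ with ℝ²) if and only if u = (x₁ + x₂/√2, y₁ + y₂/√2) for integers x₁, x₂, y₁, y₂ with x₂ ≡ y₂ (mod 2). -/

import Mathlib

noncomputable def ω : ℂ := (1 + Complex.I) / (Real.sqrt 2 : ℂ)

lemma sqrt2_div : Real.sqrt 2 / 2 = (Real.sqrt 2)⁻¹ := by
  have h := Real.mul_self_sqrt (by norm_num : (0:ℝ) ≤ 2)
  field_simp
  rw [sq]; exact h

lemma inv_sq : (Real.sqrt 2)⁻¹ ^ 2 = 2⁻¹ := by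
  rw [inv_pow, Real.sq_sqrt] <;> norm_num

lemma omega_re : ω.re = (Real.sqrt 2)⁻¹ := by
  simp [ω, Complex.div_re, Complex.normSq, Real.sq_sqrt, sqrt2_div]

lemma omega_im : ω.im = (Real.sqrt 2)⁻¹ := by
  simp [ω, Complex.div_im, Complex.normSq, Real.sq_sqrt, sqrt2_div]

lemma re_comb (a b c d : ℤ) :
    ((a : ℂ) * ω ^ 3 + b * ω ^ 2 + c * ω + d).re = d + (c - a) * (Real.sqrt 2)⁻¹ := by
  simp [pow_succ, Complex.add_re, Complex.mul_re, Complex.mul_im, omega_re, omega_im]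
  linear_combination (-(a:ℝ) * 2 * (Real.sqrt 2)⁻¹) * inv_sq

lemma im_comb (a b c d : ℤ) :
    ((a : ℂ) * ω ^ 3 + b * ω ^ 2 + c * ω + d).im = b + (a + c) * (Real.sqrt 2)⁻¹ := by
  simp [pow_succ, Complex.add_re, Complex.add_im, Complex.mul_re, Complex.mul_im, omega_re, omega_im]
  linear_combination ((a:ℝ) * 2 * (Real.sqrt 2)⁻¹ + 2 * (b:ℝ)) * inv_sq

/-- u ∈ ℂ lies in ℤ[ω] iff u = (x₁ + x₂/√2) + (y₁ + y₂/√2) i with x₁,x₂,y₁,y₂ ∈ ℤ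
    and x₂ ≡ y₂ (mod 2). -/
theorem mem_Zomega_iff_coords (u : ℂ) :
    (∃ a b c d : ℤ, u = a * ω ^ 3 + b * ω ^ 2 + c * ω + d) ↔
    (∃ x₁ x₂ y₁ y₂ : ℤ, u.re = x₁ + x₂ / Real.sqrt 2 ∧
      u.im = y₁ + y₂ / Real.sqrt 2 ∧ x₂ % 2 = y₂ % 2) := by
  constructor
  · rintro ⟨a, b, c, d, rfl⟩
    refine ⟨d, c - a, b, a + c, ?_, ?_, by omega⟩
    · rw [re_comb]; push_cast; ring
    · rw [im_comb]; push_cast; ring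
  · rintro ⟨x₁, x₂, y₁, y₂, hre, him, hpar⟩
    obtain ⟨k, hk⟩ : (2:ℤ) ∣ (y₂ - x₂) := by omega
    have hy : y₂ = x₂ + 2 * k := by omega
    subst hy
    refine ⟨k, y₁, x₂ + k, x₁, ?_⟩
    apply Complex.ext
    · rw [re_comb, hre]; push_cast; ring
    · rw [im_comb, him]; push_cast; ring
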